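/- If a frame (f_n) with analysis operator U possesses a Parseval dual, then dim(Im(U*U − I)) ≤ dim(Ker U*), i.e. the dimension of the range of U*U − I is at most the excess of the frame. -/

import Mathlib

open scoped InnerProductSpace

universe u

noncomputable section

abbrev ell2 : Type := lp (fun _ : ℕ => ℂ) 2

def IsFrame {H : Type*} [NormedAddCommGroup H] [InnerProductSpace ℂ H]
    (f : ℕ → H) : Prop :=
  ∃ A B : ℝ, 0 < A ∧ 0 < B ∧ ∀ x : H,
    A * ‖x‖ ^ 2 ≤ ∑' n, ‖⟪x, f n⟫_ℂ‖ ^ 2 ∧ ∑' n, ‖⟪x, f n⟫_ℂ‖ ^ 2 ≤ B * ‖x‖ ^ 2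

def IsAnalysisOp {H : Type*} [NormedAddCommGroup H] [InnerProductSpace ℂ H]
    (f : ℕ → H) (U : H →L[ℂ] ell2) : Prop :=
  ∀ (x : H) (n : ℕ), (U x : ∀ _ : ℕ, ℂ) n = ⟪x, f n⟫_ℂ

set_option maxHeartbeats 1000000 in
set_option synthInstance.maxHeartbeats 1000000 in
/-- If a frame possesses a Parseval dual, then `dim Im(U*U - I) ≤` the excess. -/
theorem rank_le_excess_of_parseval_dual
    {H : Type u} [NormedAddCommGroup H] [InnerProductSpace ℂ H] [CompleteSpace H]
    (f : ℕ → H) (hf : IsFrame f)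
    (U : H →L[ℂ] ell2) (hU : IsAnalysisOp f U)
    (g : ℕ → H) (V : H →L[ℂ] ell2) (hV : IsAnalysisOp g V)
    (hdual : (ContinuousLinearMap.adjoint V) ∘L U = ContinuousLinearMap.id ℂ H)
    (hParseval : (ContinuousLinearMap.adjoint V) ∘L V = ContinuousLinearMap.id ℂ H) :
    Cardinal.lift.{0} (Module.rank ℂ (LinearMap.range
        ((ContinuousLinearMap.adjoint U) ∘L U - ContinuousLinearMap.id ℂ H).toLinearMap)) ≤
      Cardinal.lift.{u} (Module.rank ℂ (LinearMap.ker (ContinuousLinearMap.adjoint U).toLinearMap)) := by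
  set A := ContinuousLinearMap.adjoint U with hA
  set B := ContinuousLinearMap.adjoint V with hB
  -- U† V = id
  have hAV : A ∘L V = ContinuousLinearMap.id ℂ H := by
    have := congrArg (ContinuousLinearMap.adjoint) hdual
    rwa [ContinuousLinearMap.adjoint_comp, ContinuousLinearMap.adjoint_adjoint,
      ContinuousLinearMap.adjoint_id] at this
  have key : A ∘L U - ContinuousLinearMap.id ℂ H = A ∘L (U - V) := by
    rw [ContinuousLinearMap.comp_sub, hAV]
  -- range(U-V) ⊆ ker B
  have hWB : LinearMap.range (U - V).toLinearMap ≤ LinearMap.ker B.toLinearMap := by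
    rintro _ ⟨x, rfl⟩
    simp only [LinearMap.mem_ker, ContinuousLinearMap.coe_coe, ContinuousLinearMap.coe_sub', Pi.sub_apply, map_sub]
    have h1 := ContinuousLinearMap.ext_iff.mp hdual x
    have h2 := ContinuousLinearMap.ext_iff.mp hParseval x
    simp only [ContinuousLinearMap.comp_apply, ContinuousLinearMap.id_apply] at h1 h2
    rw [h1, h2, sub_self]
  set K : Submodule ℂ ell2 := LinearMap.range U.toLinearMap with hK
  -- Kᗮ ≤ ker A
  have hKA : Kᗮ ≤ LinearMap.ker A.toLinearMap := by
    intro y hy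
    rw [LinearMap.mem_ker]
    refine ext_inner_left ℂ (fun v => ?_)
    rw [inner_zero_right, hA, ContinuousLinearMap.coe_coe, ContinuousLinearMap.adjoint_inner_right]
    exact (Submodule.mem_orthogonal K y).mp hy _ ⟨v, rfl⟩
  -- injection from ker B into ker A via orthogonal projection onto Kᗮ
  have hproj : ∀ y ∈ LinearMap.ker B.toLinearMap, y ∈ Kᗮᗮ → y = 0 := by
    intro y hyB hyK
    rw [Submodule.orthogonal_orthogonal_eq_closure] at hyK
    have hS : ∀ z ∈ K.topologicalClosure, U (B z) = z := by
      intro z hz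
      have hcl : IsClosed {z : ell2 | U (B z) = z} :=
        isClosed_eq ((U.comp B).continuous) continuous_id
      have hsub : (K : Set ell2) ⊆ {z : ell2 | U (B z) = z} := by
        rintro _ ⟨x, rfl⟩
        have h1 := ContinuousLinearMap.ext_iff.mp hdual x
        simp only [ContinuousLinearMap.comp_apply, ContinuousLinearMap.id_apply] at h1
        show U (B (U x)) = U x
        rw [h1]
      have hc := closure_minimal hsub hcl
      have hz' : z ∈ closure (K : Set ell2) := by
        rw [← Submodule.topologicalClosure_coe]; exact hz
      exact hc hz'
    have := hS y hyK
    rw [show B y = 0 from LinearMap.mem_ker.mp hyB, map_zero] at this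
    exact this.symm
  have hrank2 : Module.rank ℂ (LinearMap.ker B.toLinearMap) ≤ Module.rank ℂ (LinearMap.ker A.toLinearMap) := by
    let φ : LinearMap.ker B.toLinearMap →ₗ[ℂ] LinearMap.ker A.toLinearMap :=
      (Submodule.inclusion hKA) ∘ₗ
        ((Submodule.orthogonalProjectionOnto Kᗮ).toLinearMap ∘ₗ (LinearMap.ker B.toLinearMap).subtype)
    refine LinearMap.rank_le_of_injective φ ?_
    intro ⟨y, hy⟩ ⟨z, hz⟩ h
    have h' : (Submodule.orthogonalProjectionOnto Kᗮ) (y - z) = 0 := by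
      have := congrArg Subtype.val h
      simp only [φ, LinearMap.coe_comp, Function.comp_apply, Submodule.coe_inclusion,
        ContinuousLinearMap.coe_coe, Submodule.coe_subtype] at this
      rw [map_sub, sub_eq_zero]
      exact Subtype.ext this
    have hmem : y - z ∈ Kᗮᗮ := by
      have := Submodule.orthogonalProjectionOnto_eq_zero_iff.mp h'
      simpa using this
    have : y - z = 0 := hproj _ (by simp [LinearMap.mem_ker, map_sub,
      LinearMap.mem_ker.mp hy, LinearMap.mem_ker.mp hz]) hmem
    exact Subtype.ext (by linear_combination (norm := abel_nf) this)
  have hreq : LinearMap.range (A ∘L U - ContinuousLinearMap.id ℂ H).toLinearMap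
      = (LinearMap.range ((U - V) : H →L[ℂ] ell2).toLinearMap).map (A : ell2 →ₗ[ℂ] H) := by
    rw [key]
    ext y
    constructor
    · rintro ⟨x, rfl⟩
      exact ⟨(U - V) x, ⟨x, rfl⟩, rfl⟩
    · rintro ⟨w, ⟨x, rfl⟩, rfl⟩
      exact ⟨x, rfl⟩
  calc Cardinal.lift.{0} (Module.rank ℂ (LinearMap.range
        (A ∘L U - ContinuousLinearMap.id ℂ H).toLinearMap))
      = Cardinal.lift.{0} (Module.rank ℂ
          ((LinearMap.range ((U - V) : H →L[ℂ] ell2).toLinearMap).map (A : ell2 →ₗ[ℂ] H))) := by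
        rw [hreq]
    _ ≤ Cardinal.lift.{u} (Module.rank ℂ (LinearMap.range ((U - V) : H →L[ℂ] ell2).toLinearMap)) :=
        lift_rank_map_le _ _
    _ ≤ Cardinal.lift.{u} (Module.rank ℂ (LinearMap.ker B.toLinearMap)) := by
        exact Cardinal.lift_le.mpr (Submodule.rank_mono hWB)
    _ ≤ Cardinal.lift.{u} (Module.rank ℂ (LinearMap.ker A.toLinearMap)) := Cardinal.lift_le.mpr hrank2
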